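/- Let ℓ and ℓ' be distinct lines in 𝔻² defined respectively by y = ax + b and y = a'x + b', where a = a₁ + εa₂, b = b₁ + εb₂, a' = a'₁ + εa'₂, b' = b'₁ + εb'₂. Then ℓ ∩ ℓ' contains more than one point if and only if a₁ = a'₁, b₁ = b'₁, and a₂ ≠ a'₂. Moreover, when these conditions are satisfied, ℓ ∩ ℓ' is infinite, and there exist r₁, r₂ ∈ ℝ such that every point (x,y) ∈ ℓ ∩ ℓ' satisfies Re(x) = r₁ and Re(y) = r₂. -/

import Mathlib

/-- The real part of a dual number `a = a₁ + ε a₂`, i.e. `a₁`. -/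
def DRe (x : DualNumber ℝ) : ℝ := TrivSqZeroExt.fst x

/-- The imaginary part of a dual number `a = a₁ + ε a₂`, i.e. `a₂`. -/
def DIm (x : DualNumber ℝ) : ℝ := TrivSqZeroExt.snd x

/-- The line in the dual plane `𝔻²` defined by the equation `y = a x + b`. -/
def dualLine (a b : DualNumber ℝ) : Set (DualNumber ℝ × DualNumber ℝ) :=
  {p | p.2 = a * p.1 + b}

open TrivSqZeroExt in
lemma mem_dualLine_iff (a b : DualNumber ℝ) (p : DualNumber ℝ × DualNumber ℝ) :
    p ∈ dualLine a b ↔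
      (p.2.fst = a.fst * p.1.fst + b.fst ∧
       p.2.snd = a.fst * p.1.snd + a.snd * p.1.fst + b.snd) := by
  simp [dualLine, TrivSqZeroExt.ext_iff, smul_eq_mul]

open TrivSqZeroExt in
/-- **Lemma 2.1(a).** Let `ℓ, ℓ'` be distinct lines in `𝔻²` defined by `y = ax + b` and
`y = a'x + b'`. Then `ℓ ∩ ℓ'` contains more than one point iff `a₁ = a'₁`, `b₁ = b'₁` and
`a₂ ≠ a'₂`; and in that case `ℓ ∩ ℓ'` is infinite and there are `r₁, r₂ ∈ ℝ` such that every
`(x, y) ∈ ℓ ∩ ℓ'` has `Re(x) = r₁` and `Re(y) = r₂`. -/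
theorem dual_line_intersection (a b a' b' : DualNumber ℝ)
    (hne : dualLine a b ≠ dualLine a' b') :
    ((dualLine a b ∩ dualLine a' b').Nontrivial ↔
      DRe a = DRe a' ∧ DRe b = DRe b' ∧ DIm a ≠ DIm a') ∧
    (DRe a = DRe a' ∧ DRe b = DRe b' ∧ DIm a ≠ DIm a' →
      (dualLine a b ∩ dualLine a' b').Infinite ∧
      ∃ r₁ r₂ : ℝ, ∀ p ∈ dualLine a b ∩ dualLine a' b',
        DRe p.1 = r₁ ∧ DRe p.2 = r₂) := by
  have hmem : ∀ p : DualNumber ℝ × DualNumber ℝ,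
      p ∈ dualLine a b ∩ dualLine a' b' ↔
        (p.2.fst = a.fst * p.1.fst + b.fst ∧
         p.2.snd = a.fst * p.1.snd + a.snd * p.1.fst + b.snd ∧
         p.2.fst = a'.fst * p.1.fst + b'.fst ∧
         p.2.snd = a'.fst * p.1.snd + a'.snd * p.1.fst + b'.snd) := by
    intro p
    rw [Set.mem_inter_iff, mem_dualLine_iff, mem_dualLine_iff]
    tauto
  -- second part
  have main : DRe a = DRe a' ∧ DRe b = DRe b' ∧ DIm a ≠ DIm a' →
      (dualLine a b ∩ dualLine a' b').Infinite ∧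
      ∃ r₁ r₂ : ℝ, ∀ p ∈ dualLine a b ∩ dualLine a' b',
        DRe p.1 = r₁ ∧ DRe p.2 = r₂ := by
    rintro ⟨h1, h2, h3⟩
    simp only [DRe, DIm] at h1 h2 h3
    set x₁ : ℝ := (b'.snd - b.snd) / (a.snd - a'.snd) with hx₁
    have hd : a.snd - a'.snd ≠ 0 := sub_ne_zero.mpr h3
    have hx₁eq : a.snd * x₁ + b.snd = a'.snd * x₁ + b'.snd := by
      have key : (a.snd - a'.snd) * x₁ = b'.snd - b.snd := by
        rw [hx₁]; field_simp
      linarith [key]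
    set f : ℝ → DualNumber ℝ × DualNumber ℝ := fun t =>
      ((inl x₁ + inr t), (inl (a.fst * x₁ + b.fst) + inr (a.fst * t + a.snd * x₁ + b.snd)))
      with hf
    have hfmem : ∀ t, f t ∈ dualLine a b ∩ dualLine a' b' := by
      intro t
      rw [hmem]
      simp only [hf, fst_add, snd_add, fst_inl, snd_inl, fst_inr, snd_inr,
        add_zero, zero_add]
      refine ⟨trivial, trivial, by rw [h1, h2], ?_⟩
      rw [h1]
      linarith [hx₁eq]
    have hfi : Function.Injective f := by
      intro s t hst
      have := congrArg (fun p => p.1.snd) hst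
      simpa [hf] using this
    refine ⟨Set.infinite_of_injective_forall_mem hfi hfmem, x₁, a.fst * x₁ + b.fst, ?_⟩
    intro p hp
    rw [hmem] at hp
    obtain ⟨e1, e2, e3, e4⟩ := hp
    have hx : p.1.fst = x₁ := by
      rw [h1] at e2
      have : (a.snd - a'.snd) * p.1.fst = b'.snd - b.snd := by linarith [e2, e4]
      rw [hx₁, eq_div_iff hd]
      linarith [this]
    constructor
    · exact hx
    · simp only [DRe]; rw [e1, hx]
  refine ⟨⟨?_, fun h => (main h).1.nontrivial⟩, main⟩
  -- nontrivial → conditions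
  rintro ⟨p, hp, q, hq, hpq⟩
  rw [hmem] at hp hq
  obtain ⟨p1, p2, p3, p4⟩ := hp
  obtain ⟨q1, q2, q3, q4⟩ := hq
  simp only [DRe, DIm]
  by_cases h1 : a.fst = a'.fst
  · have hb : b.fst = b'.fst := by
      rw [h1] at p1; linarith [p1, p3]
    refine ⟨h1, hb, ?_⟩
    intro h3
    apply hne
    have ha : a = a' := TrivSqZeroExt.ext h1 h3
    have hbsnd : b.snd = b'.snd := by
      rw [h1, h3] at p2; linarith [p2, p4]
    have hb' : b = b' := TrivSqZeroExt.ext hb hbsnd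
    rw [ha, hb']
  · exfalso
    -- fst equations determine p.1.fst uniquely
    have hpx : (a.fst - a'.fst) * p.1.fst = b'.fst - b.fst := by linarith [p1, p3]
    have hqx : (a.fst - a'.fst) * q.1.fst = b'.fst - b.fst := by linarith [q1, q3]
    have hd : a.fst - a'.fst ≠ 0 := sub_ne_zero.mpr h1
    have hx : p.1.fst = q.1.fst := by
      have := hpx.trans hqx.symm
      exact mul_left_cancel₀ hd this
    have hx2 : p.1.snd = q.1.snd := by
      have hps : (a.fst - a'.fst) * p.1.snd = b'.snd - b.snd - (a.snd - a'.snd) * p.1.fst := by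
        linarith [p2, p4]
      have hqs : (a.fst - a'.fst) * q.1.snd = b'.snd - b.snd - (a.snd - a'.snd) * q.1.fst := by
        linarith [q2, q4]
      rw [hx] at hps
      exact mul_left_cancel₀ hd (hps.trans hqs.symm)
    apply hpq
    have h1eq : p.1 = q.1 := TrivSqZeroExt.ext hx hx2
    have h2eq : p.2 = q.2 := by
      apply TrivSqZeroExt.ext
      · rw [p1, q1, hx]
      · rw [p2, q2, hx, hx2]
    exact Prod.ext h1eq h2eq
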